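/- Let N ≥ 1, let C_1,…,C_N > 0 (waiting-cost rates) and x̄_1,…,x̄_N > 0 (mean service times), and let W : (0,∞) → ℝ be a differentiable function. Suppose that for each i = 1,…,N there exists b_i > 0 that is the unique minimizer over (0,∞) of the priced cost a ↦ C_i·W(a) + x̄_i·a. If π is a permutation of {1,…,N} such that C_{π(1)}/x̄_{π(1)} < C_{π(2)}/x̄_{π(2)} < ⋯ < C_{π(N)}/x̄_{π(N)}, then b_{π(1)} < b_{π(2)} < ⋯ < b_{π(N)}. -/

import Mathlib

/-- `Cμ`-type ordering under service-time pricing: if `W : (0,∞) → ℝ` is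
differentiable, the waiting costs `C_i` and mean service times `x̄_i` are
positive, for each class `i` the bid `b_i > 0` is the unique minimizer over
`(0,∞)` of the priced cost `a ↦ C_i·W(a) + x̄_i·a`, and `π` is a permutation
with `C_{π(1)}/x̄_{π(1)} < ⋯ < C_{π(N)}/x̄_{π(N)}`, then
`b_{π(1)} < ⋯ < b_{π(N)}`. -/
theorem priced_equilibrium_bids_Cmu_ordered (N : ℕ) (hN : 1 ≤ N)
    (C xbar b : Fin N → ℝ) (W : ℝ → ℝ) (π : Equiv.Perm (Fin N))
    (hCpos : ∀ i, 0 < C i) (hxpos : ∀ i, 0 < xbar i)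
    (hW : DifferentiableOn ℝ W (Set.Ioi (0 : ℝ)))
    (hbpos : ∀ i, 0 < b i)
    (hmin : ∀ i : Fin N, ∀ a : ℝ, 0 < a →
      C i * W (b i) + xbar i * b i ≤ C i * W a + xbar i * a)
    (huniq : ∀ i : Fin N, ∀ a : ℝ, 0 < a →
      (∀ a' : ℝ, 0 < a' → C i * W a + xbar i * a ≤ C i * W a' + xbar i * a') →
      a = b i)
    (hπ : StrictMono fun k : Fin N => C (π k) / xbar (π k)) :
    StrictMono fun k : Fin N => b (π k) := by
  -- Key: if C i / xbar i < C j / xbar j then b i < b j.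
  have key : ∀ i j : Fin N, C i / xbar i < C j / xbar j → b i < b j := by
    intro i j hrat
    have hCi := hCpos i; have hCj := hCpos j
    have hxi := hxpos i; have hxj := hxpos j
    -- cross-multiplied ratio inequality
    have hcross : C i * xbar j < C j * xbar i := by
      rw [div_lt_div_iff₀ hxi hxj] at hrat; linarith
    have h1 := hmin i (b j) (hbpos j)
    have h2 := hmin j (b i) (hbpos i)
    -- weak inequality b i ≤ b j
    have hle : b i ≤ b j := by nlinarith [mul_pos hCi hCj]
    rcases lt_or_eq_of_le hle with h | h
    · exact h
    · -- equality: derivative argument gives a contradiction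
      exfalso
      have hβ : (0:ℝ) < b i := hbpos i
      have hWd : DifferentiableAt ℝ W (b i) :=
        (hW (b i) hβ).differentiableAt (isOpen_Ioi.mem_nhds hβ)
      set d : ℝ := deriv W (b i) with hd
      have hWd' : HasDerivAt W d (b i) := hWd.hasDerivAt
      have hmem : Set.Ioi (0:ℝ) ∈ nhds (b i) := isOpen_Ioi.mem_nhds hβ
      have hderiv : ∀ k : Fin N, b k = b i → C k * d + xbar k = 0 := by
        intro k hk
        have hf : HasDerivAt (fun a => C k * W a + xbar k * a)
            (C k * d + xbar k) (b i) := by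
          have := ((hWd'.const_mul (C k)).add
            ((hasDerivAt_id (b i)).const_mul (xbar k)))
          simp only [mul_one] at this
          exact this
        have hloc : IsLocalMin (fun a => C k * W a + xbar k * a) (b i) := by
          filter_upwards [hmem] with a ha
          rw [← hk]
          exact hmin k a ha
        exact hloc.hasDerivAt_eq_zero hf
      have e1 : C i * d + xbar i = 0 := hderiv i rfl
      have e2 : C j * d + xbar j = 0 := hderiv j h.symm
      nlinarith [mul_pos hCi hCj]
  intro k l hkl
  exact key _ _ (hπ hkl)
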